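/- Let S be a nonempty finite type, A a finite type of actions, γ ∈ ℝ with 0 ≤ γ < 1. For each a ∈ A and s ∈ S let l^a_s, u^a_s : S → ℝ satisfy 0 ≤ l^a_s ≤ u^a_s componentwise, (∑ t, l^a_s t) ≤ 1 and 1 ≤ (∑ t, u^a_s t), set U^a_s := {p : S → ℝ | (∀ t, l^a_s t ≤ p t ∧ p t ≤ u^a_s t) ∧ ∑ t, p t = 1}, and let r^a : S → ℝ. For a pure policy π : S → A let v↓(π) : S → ℝ be the unique solution of v s = r^{π s} s + γ * sInf {x | ∃ p ∈ U^{π s}_s, x = ∑ t, p t * v t} for all s. Let s₀ ∈ S and a ∈ A satisfy r^a s₀ + γ * sInf {x | ∃ p ∈ U^a_{s₀}, x = ∑ t, p t * v↓(π) t} ≥ v↓(π) s₀, and set π' := Function.update π s₀ a. Then v↓(π') s ≥ v↓(π) s for all s; moreover, if the hypothesis inequality is strict, then v↓(π') s₀ > v↓(π) s₀. -/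

import Mathlib

theorem stmt8_simplex_nonempty {S : Type} [Fintype S] (l u : S → ℝ)
    (hlu : ∀ t, l t ≤ u t) (hsl : ∑ t, l t ≤ 1) (hsu : 1 ≤ ∑ t, u t) :
    ∃ p : S → ℝ, (∀ t, l t ≤ p t ∧ p t ≤ u t) ∧ ∑ t, p t = 1 := by
  rcases eq_or_lt_of_le (Finset.sum_le_sum (fun t _ => hlu t)) with h | h
  · exact ⟨l, fun t => ⟨le_refl _, hlu t⟩, le_antisymm hsl (h ▸ hsu)⟩
  · set θ := (1 - ∑ t, l t) / (∑ t, u t - ∑ t, l t) with hθ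
    have hd : 0 < ∑ t, u t - ∑ t, l t := by linarith
    have hθ0 : 0 ≤ θ := div_nonneg (by linarith) hd.le
    have hθ1 : θ ≤ 1 := (div_le_one hd).2 (by linarith)
    refine ⟨fun t => l t + θ * (u t - l t), fun t => ⟨?_, ?_⟩, ?_⟩
    · have := mul_nonneg hθ0 (sub_nonneg.2 (hlu t)); simp only; linarith
    · have h1 : θ * (u t - l t) ≤ 1 * (u t - l t) :=
        mul_le_mul_of_nonneg_right hθ1 (sub_nonneg.2 (hlu t))
      simp only; linarith
    · rw [Finset.sum_add_distrib, ← Finset.mul_sum, Finset.sum_sub_distrib, hθ]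
      field_simp
      ring

theorem stmt8_sInf_shift_le {S : Type} [Fintype S] [Nonempty S] (l u : S → ℝ)
    (hl0 : ∀ t, 0 ≤ l t) (hlu : ∀ t, l t ≤ u t)
    (hsl : ∑ t, l t ≤ 1) (hsu : 1 ≤ ∑ t, u t) (v w : S → ℝ) (c : ℝ)
    (h : ∀ t, v t + c ≤ w t) :
    sInf {x | ∃ p : S → ℝ, ((∀ t, l t ≤ p t ∧ p t ≤ u t) ∧ ∑ t, p t = 1) ∧
        x = ∑ t, p t * v t} + c ≤
    sInf {x | ∃ p : S → ℝ, ((∀ t, l t ≤ p t ∧ p t ≤ u t) ∧ ∑ t, p t = 1) ∧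
        x = ∑ t, p t * w t} := by
  obtain ⟨q, hq⟩ := stmt8_simplex_nonempty l u hlu hsl hsu
  have hbdd : BddBelow {x | ∃ p : S → ℝ, ((∀ t, l t ≤ p t ∧ p t ≤ u t) ∧ ∑ t, p t = 1) ∧
      x = ∑ t, p t * v t} := by
    refine ⟨Finset.univ.inf' Finset.univ_nonempty v, ?_⟩
    rintro x ⟨p, ⟨hp, hps⟩, rfl⟩
    calc Finset.univ.inf' Finset.univ_nonempty v
        = ∑ t, p t * Finset.univ.inf' Finset.univ_nonempty v := by
          rw [← Finset.sum_mul, hps, one_mul]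
      _ ≤ ∑ t, p t * v t := Finset.sum_le_sum fun t _ =>
          mul_le_mul_of_nonneg_left (Finset.inf'_le _ (Finset.mem_univ t))
            ((hl0 t).trans (hp t).1)
  refine le_csInf ⟨_, q, hq, rfl⟩ ?_
  rintro x ⟨p, ⟨hp, hps⟩, rfl⟩
  have h1 : sInf {x | ∃ p : S → ℝ, ((∀ t, l t ≤ p t ∧ p t ≤ u t) ∧ ∑ t, p t = 1) ∧
      x = ∑ t, p t * v t} ≤ ∑ t, p t * v t := csInf_le hbdd ⟨p, ⟨hp, hps⟩, rfl⟩
  have h2 : ∑ t, p t * v t + c ≤ ∑ t, p t * w t := by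
    have : ∑ t, p t * v t + c = ∑ t, p t * (v t + c) := by
      simp [mul_add, Finset.sum_add_distrib, ← Finset.sum_mul, hps]
    rw [this]
    exact Finset.sum_le_sum fun t _ =>
      mul_le_mul_of_nonneg_left (h t) ((hl0 t).trans (hp t).1)
  linarith

theorem stmt_8 (S A : Type) [Fintype S] [Nonempty S] [DecidableEq S] [Fintype A]
    (γ : ℝ) (hγ0 : 0 ≤ γ) (hγ1 : γ < 1)
    (l u : A → S → S → ℝ)
    (hl0 : ∀ a s t, 0 ≤ l a s t) (hlu : ∀ a s t, l a s t ≤ u a s t)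
    (hsl : ∀ a s, ∑ t, l a s t ≤ 1) (hsu : ∀ a s, 1 ≤ ∑ t, u a s t)
    (r : A → S → ℝ)
    (π : S → A) (s₀ : S) (a : A)
    (vd vd' : S → ℝ)
    (hvd : ∀ s, vd s = r (π s) s + γ * sInf {x | ∃ p : S → ℝ,
      ((∀ t, l (π s) s t ≤ p t ∧ p t ≤ u (π s) s t) ∧ ∑ t, p t = 1) ∧ x = ∑ t, p t * vd t})
    (hvd' : ∀ s, vd' s = r (Function.update π s₀ a s) s + γ * sInf {x | ∃ p : S → ℝ,
      ((∀ t, l (Function.update π s₀ a s) s t ≤ p t ∧ p t ≤ u (Function.update π s₀ a s) s t) ∧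
        ∑ t, p t = 1) ∧ x = ∑ t, p t * vd' t})
    (hadv : r a s₀ + γ * sInf {x | ∃ p : S → ℝ,
      ((∀ t, l a s₀ t ≤ p t ∧ p t ≤ u a s₀ t) ∧ ∑ t, p t = 1) ∧ x = ∑ t, p t * vd t} ≥ vd s₀) :
    (∀ s, vd' s ≥ vd s) ∧
    (r a s₀ + γ * sInf {x | ∃ p : S → ℝ,
      ((∀ t, l a s₀ t ≤ p t ∧ p t ≤ u a s₀ t) ∧ ∑ t, p t = 1) ∧ x = ∑ t, p t * vd t} > vd s₀ →
      vd' s₀ > vd s₀) := by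
  have key : ∀ (v w : S → ℝ) (b : A) (s : S) (c : ℝ), (∀ t, v t + c ≤ w t) →
      sInf {x | ∃ p : S → ℝ, ((∀ t, l b s t ≤ p t ∧ p t ≤ u b s t) ∧ ∑ t, p t = 1) ∧
        x = ∑ t, p t * v t} + c ≤
      sInf {x | ∃ p : S → ℝ, ((∀ t, l b s t ≤ p t ∧ p t ≤ u b s t) ∧ ∑ t, p t = 1) ∧
        x = ∑ t, p t * w t} := fun v w b s c h =>
    stmt8_sInf_shift_le (l b s) (u b s) (hl0 b s) (hlu b s) (hsl b s) (hsu b s) v w c h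
  obtain ⟨s₁, -, hs₁⟩ := Finset.exists_min_image Finset.univ (fun s => vd' s - vd s)
    Finset.univ_nonempty
  set m := vd' s₁ - vd s₁ with hm
  have hmle : ∀ s, m ≤ vd' s - vd s := fun s => hs₁ s (Finset.mem_univ s)
  have hshift : ∀ t, vd t + m ≤ vd' t := fun t => by linarith [hmle t]
  have hγm : γ * m ≤ m := by
    by_cases hc : s₁ = s₀
    · subst hc
      have h1 := hvd' s₁
      rw [Function.update_self] at h1
      have h2 := key vd vd' a s₁ m hshift
      have h3 := mul_le_mul_of_nonneg_left h2 hγ0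
      rw [mul_add] at h3
      linarith [hadv]
    · have h1 := hvd' s₁
      rw [Function.update_of_ne hc] at h1
      have h0 := hvd s₁
      have h2 := key vd vd' (π s₁) s₁ m hshift
      have h3 := mul_le_mul_of_nonneg_left h2 hγ0
      rw [mul_add] at h3
      linarith
  have hm0 : 0 ≤ m := by nlinarith
  have part1 : ∀ s, vd' s ≥ vd s := fun s => by linarith [hmle s]
  refine ⟨part1, fun hstrict => ?_⟩
  have h1 := hvd' s₀
  rw [Function.update_self] at h1
  have h2 := key vd vd' a s₀ 0 (fun t => by linarith [part1 t])
  have h3 := mul_le_mul_of_nonneg_left h2 hγ0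
  rw [mul_add] at h3
  linarith
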